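/- The function x(t) = k / (1 + (γ n (p-1)(t-t₀) + A^{1-p})^{1/(1-p)})^{1/n}, where A = (k/x₀)^n − 1, satisfies the ODE dx/dt = γ k^{n(p-1)} x^{1+n(1-p)} (1 − (x/k)^n)^p with initial condition x(t₀) = x₀, on any interval where the inner expression γ n (p-1)(t-t₀) + A^{1-p} is positive. -/

import Mathlib

open Real

/-- The general growth curve satisfies the generalized growth ODE with initial
condition `x t₀ = x₀`, at every time `t` where the inner expression is positive. -/
theorem general_growth_curve_solves_ODE
    (γ n k x₀ p t₀ : ℝ) (hγ : 0 < γ) (hn : 0 < n) (hx₀ : 0 < x₀) (hx₀k : x₀ < k)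
    (hp : (1 < p ∧ p < 1 + 1 / n) ∨ (0 < p ∧ p < 1))
    (A : ℝ) (hA : A = (k / x₀) ^ n - 1)
    (x : ℝ → ℝ)
    (hx : ∀ t, x t =
      k / (1 + (γ * n * (p - 1) * (t - t₀) + A ^ (1 - p)) ^ (1 / (1 - p))) ^ (1 / n)) :
    x t₀ = x₀ ∧
      ∀ t, 0 < γ * n * (p - 1) * (t - t₀) + A ^ (1 - p) →
        HasDerivAt x
          (γ * k ^ (n * (p - 1)) * (x t) ^ (1 + n * (1 - p)) * (1 - (x t / k) ^ n) ^ p) t := by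
  have hk : 0 < k := hx₀.trans hx₀k
  have hp1 : p ≠ 1 := by rcases hp with ⟨h,_⟩|⟨_,h⟩ <;> [exact ne_of_gt h; exact ne_of_lt h]
  have h1p : (1:ℝ) - p ≠ 0 := sub_ne_zero.mpr (Ne.symm hp1)
  have hkx : 1 < k / x₀ := (one_lt_div hx₀).mpr hx₀k
  have hA1 : 1 < (k / x₀) ^ n :=
    Real.one_lt_rpow_iff_of_pos (by positivity) |>.mpr (Or.inl ⟨hkx, hn⟩)
  have hA0 : 0 < A := by rw [hA]; linarith
  constructor
  · rw [hx t₀]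
    simp only [sub_self, mul_zero, zero_add]
    rw [← Real.rpow_mul hA0.le, mul_one_div, div_self h1p, Real.rpow_one, hA]
    rw [show 1 + ((k / x₀) ^ n - 1) = (k/x₀)^n by ring]
    rw [← Real.rpow_mul (by positivity), mul_one_div, div_self hn.ne', Real.rpow_one]
    field_simp
  · intro t hu
    have hxg : x = fun s =>
        k / (1 + (γ * n * (p - 1) * (s - t₀) + A ^ (1 - p)) ^ (1 / (1 - p))) ^ (1 / n) :=
      funext hx
    set U : ℝ := γ * n * (p - 1) * (t - t₀) + A ^ (1 - p) with hU
    have hUp : 0 < U ^ (1 / (1 - p)) := Real.rpow_pos_of_pos hu _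
    set V : ℝ := 1 + U ^ (1 / (1 - p)) with hV
    have hV0 : 0 < V := by positivity
    have hVn : 0 < V ^ (1 / n) := Real.rpow_pos_of_pos hV0 _
    have hu' : HasDerivAt (fun s => γ * n * (p - 1) * (s - t₀) + A ^ (1 - p))
        (γ * n * (p - 1) * 1) t :=
      (((hasDerivAt_id t).sub_const t₀).const_mul (γ * n * (p - 1))).add_const _
    have h1 : HasDerivAt (fun s => (γ * n * (p - 1) * (s - t₀) + A ^ (1 - p)) ^ (1 / (1 - p)))
        (γ * n * (p - 1) * 1 * (1 / (1 - p)) * U ^ (1 / (1 - p) - 1)) t :=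
      hu'.rpow_const (Or.inl hu.ne')
    have h2 := h1.const_add 1
    have h3 : HasDerivAt
        (fun s => (1 + (γ * n * (p - 1) * (s - t₀) + A ^ (1 - p)) ^ (1 / (1 - p))) ^ (1 / n))
        (γ * n * (p - 1) * 1 * (1 / (1 - p)) * U ^ (1 / (1 - p) - 1) * (1 / n) * V ^ (1 / n - 1))
        t := h2.rpow_const (Or.inl hV0.ne')
    have h4 := (hasDerivAt_const t k).div h3 hVn.ne'
    rw [hxg]
    refine h4.congr_deriv (Eq.symm ?_)
    simp only [← hU, ← hV]
    have e0 : k / V ^ (1/n) / k = (V ^ (1/n))⁻¹ := by field_simp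
    have e1 : ((V ^ (1/n))⁻¹) ^ n = V⁻¹ := by
      rw [← Real.rpow_neg_one (V ^ (1/n)), ← Real.rpow_mul hV0.le, ← Real.rpow_mul hV0.le]
      rw [show 1 / n * -1 * n = -1 by field_simp, Real.rpow_neg_one]
    have e2 : 1 - V⁻¹ = U ^ (1/(1-p)) / V := by
      rw [eq_div_iff hV0.ne', hV]; field_simp; ring
    have e3 : (U ^ (1/(1-p)) / V) ^ p = U ^ (1/(1-p) * p) / V ^ p := by
      rw [Real.div_rpow hUp.le hV0.le, ← Real.rpow_mul hu.le]
    have e4 : (k / V ^ (1/n)) ^ (1 + n*(1-p)) = k ^ (1 + n*(1-p)) / V ^ (1/n * (1 + n*(1-p))) := by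
      rw [Real.div_rpow hk.le hVn.le, ← Real.rpow_mul hV0.le]
    rw [e0, e1, e2, e3, e4]
    have hkk : k ^ (n*(p-1)) * k ^ (1 + n*(1-p)) = k := by
      rw [← Real.rpow_add hk, show n*(p-1) + (1 + n*(1-p)) = 1 by ring, Real.rpow_one]
    have hVV : V ^ (1/n * (1 + n*(1-p))) * V ^ p = V ^ (1/n + 1) := by
      rw [← Real.rpow_add hV0]; congr 1; field_simp; ring
    have hUe : U ^ (1/(1-p) - 1) = U ^ (1/(1-p) * p) := by
      congr 1; field_simp; ring
    have hVf : V ^ (1/n - 1) * V ^ (1/n + 1) = V ^ (1/n) * V ^ (1/n) := by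
      rw [← Real.rpow_add hV0, ← Real.rpow_add hV0]; congr 1; ring
    have lhs_eq : γ * k ^ (n*(p-1)) * (k ^ (1 + n*(1-p)) / V ^ (1/n * (1 + n*(1-p)))) *
        (U ^ (1/(1-p) * p) / V ^ p) = γ * k * U ^ (1/(1-p) * p) / V ^ (1/n + 1) := by
      rw [show γ * k ^ (n*(p-1)) * (k ^ (1 + n*(1-p)) / V ^ (1/n * (1 + n*(1-p)))) *
          (U ^ (1/(1-p) * p) / V ^ p)
          = γ * (k ^ (n*(p-1)) * k ^ (1 + n*(1-p))) * U ^ (1/(1-p) * p) /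
            (V ^ (1/n * (1 + n*(1-p))) * V ^ p) by ring, hkk, hVV]
    rw [lhs_eq, div_eq_div_iff (by positivity) (by positivity), hUe, sq, ← hVf]
    field_simp
    ring
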